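/- A ring R is semilocal if and only if there exists a local ring homomorphism from R into a semisimple artinian ring. -/

import Mathlib

universe u

/-- A ring is semilocal if its quotient by the Jacobson radical is a semisimple
(artinian) ring. -/
def IsSemilocalRing (R : Type*) [Ring R] : Prop :=
  IsSemisimpleRing (TwoSidedIdeal.jacobson (⊥ : TwoSidedIdeal R)).ringCon.Quotient

section Aux

variable {R : Type*} [Ring R]

/-- Membership in the Jacobson radical via units. -/
lemma mem_jacobson_bot_iff' {x : R} :
    x ∈ TwoSidedIdeal.jacobson (⊥ : TwoSidedIdeal R) ↔ ∀ y : R, IsUnit (1 - y * x) := by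
  rw [TwoSidedIdeal.mem_jacobson_iff]
  constructor
  · intro h
    have key : ∀ y : R, ∃ z : R, z * (1 - y * x) = 1 := by
      intro y
      obtain ⟨z, hz⟩ := h (-y)
      rw [TwoSidedIdeal.mem_bot, sub_eq_zero] at hz
      refine ⟨z, ?_⟩
      calc z * (1 - y * x) = z * -y * x + z := by noncomm_ring
        _ = 1 := hz
    intro y
    obtain ⟨z, hz⟩ := key y
    obtain ⟨w, hw⟩ := key (-(z * y))
    have hzform : 1 - -(z * y) * x = z := by
      have expand : z * (1 - y * x) + z * (y * x) = z := by noncomm_ring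
      calc 1 - -(z * y) * x = 1 + z * (y * x) := by noncomm_ring
        _ = z * (1 - y * x) + z * (y * x) := by rw [hz]
        _ = z := expand
    rw [hzform] at hw
    -- hw : w * z = 1, hz : z * (1 - y * x) = 1
    have hwval : w = 1 - y * x := by
      calc w = w * (z * (1 - y * x)) := by rw [hz, mul_one]
        _ = (w * z) * (1 - y * x) := by rw [mul_assoc]
        _ = 1 - y * x := by rw [hw, one_mul]
    exact ⟨⟨1 - y * x, z, by rw [← hwval]; exact hw, hz⟩, rfl⟩
  · intro h y
    have hu := h (-y)
    obtain ⟨z, hz⟩ := hu.exists_left_inv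
    refine ⟨z, ?_⟩
    rw [TwoSidedIdeal.mem_bot]
    calc z * y * x + z - 1 = z * (1 - -y * x) - 1 := by noncomm_ring
      _ = 0 := by rw [hz, sub_self]

variable {S : Type*} [Ring S] [IsSemisimpleRing S]

/-- In a semisimple ring, a non-unit has a nonzero left annihilator. -/
lemma exists_ne_zero_mul_eq_zero_of_not_isUnit (u : S) (hu : ¬ IsUnit u) :
    ∃ w : S, w ≠ 0 ∧ w * u = 0 := by
  by_contra hc
  push_neg at hc
  have hinj : Function.Injective (LinearMap.toSpanSingleton S S u) := by
    intro a b hab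
    have : (a - b) * u = 0 := by
      have : a * u = b * u := by
        simpa [LinearMap.toSpanSingleton_apply, smul_eq_mul] using hab
      rw [sub_mul, this, sub_self]
    by_contra hne
    exact hc (a - b) (sub_ne_zero.mpr hne) this
  have hsurj := IsArtinian.surjective_of_injective_endomorphism
    (LinearMap.toSpanSingleton S S u) hinj
  obtain ⟨v, hv⟩ := hsurj 1
  have hvu : v * u = 1 := by simpa [LinearMap.toSpanSingleton_apply, smul_eq_mul] using hv
  apply hu
  have huv : u * v = 1 := by
    have h1 : (u * v - 1) * u = 0 := by
      calc (u * v - 1) * u = u * (v * u) - u := by noncomm_ring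
        _ = 0 := by rw [hvu, mul_one, sub_self]
    by_contra hne
    exact hc (u * v - 1) (sub_ne_zero.mpr hne) h1
  exact ⟨⟨u, v, huv, hvu⟩, rfl⟩

variable (φ : R →+* S) (hφ : ∀ r : R, IsUnit (φ r) → IsUnit r)

include hφ in
/-- key strict decrease lemma -/
lemma span_mul_lt (t b : R) (hb : ¬ IsUnit (1 - b * t)) :
    Submodule.span S {φ (t * (1 - b * t))} < Submodule.span S {φ t} := by
  have hu : ¬ IsUnit (φ (1 - b * t)) := fun h => hb (hφ _ h)
  obtain ⟨w, hw0, hw⟩ := exists_ne_zero_mul_eq_zero_of_not_isUnit _ hu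
  have hkey : φ (t * (1 - b * t)) = φ (1 - t * b) * φ t := by
    rw [← map_mul]; congr 1; noncomm_ring
  have hwmem : w ∈ Submodule.span S {φ t} := by
    have h1 : w = w * φ b * φ t := by
      have h2 : φ (1 - b * t) = 1 - φ b * φ t := by
        rw [map_sub, map_mul, map_one]
      rw [h2] at hw
      have : w - w * φ b * φ t = 0 := by rw [← hw]; noncomm_ring
      exact sub_eq_zero.mp this
    rw [h1]
    exact Submodule.smul_mem _ _ (Submodule.mem_span_singleton_self _)
  have hle : Submodule.span S {φ (t * (1 - b * t))} ≤ Submodule.span S {φ t} := by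
    rw [Submodule.span_le, Set.singleton_subset_iff]
    rw [hkey]
    exact Submodule.smul_mem _ _ (Submodule.mem_span_singleton_self _)
  refine lt_of_le_of_ne hle (fun heq => ?_)
  set N := Submodule.span S {φ t} with hN
  have hmul : ∀ x ∈ N, x * φ (1 - b * t) ∈ N := by
    intro x hx
    obtain ⟨a, ha⟩ := Submodule.mem_span_singleton.mp hx
    have : x * φ (1 - b * t) = (a * φ (1 - t * b)) * φ t := by
      rw [← ha, smul_eq_mul, mul_assoc, ← map_mul, hkey, mul_assoc]
    rw [this]
    exact Submodule.smul_mem _ _ (Submodule.mem_span_singleton_self _)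
  set f : N →ₗ[S] N := (LinearMap.toSpanSingleton S S (φ (1 - b * t))).restrict
    (fun x hx => by simpa [LinearMap.toSpanSingleton_apply, smul_eq_mul] using hmul x hx)
    with hf
  have hfs : Function.Surjective f := by
    rintro ⟨y, hy⟩
    have hy' : y ∈ Submodule.span S {φ (t * (1 - b * t))} := heq ▸ hy
    obtain ⟨a, ha⟩ := Submodule.mem_span_singleton.mp hy'
    have hamem : a * φ t ∈ N := Submodule.smul_mem _ _ (Submodule.mem_span_singleton_self _)
    refine ⟨⟨a * φ t, hamem⟩, ?_⟩
    apply Subtype.ext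
    show (a * φ t) • φ (1 - b * t) = y
    rw [smul_eq_mul, mul_assoc, ← map_mul]
    rw [← smul_eq_mul, ha]
  have hfi := IsNoetherian.injective_of_surjective_endomorphism f hfs
  have : f ⟨w, hwmem⟩ = f 0 := by
    apply Subtype.ext
    show w • φ (1 - b * t) = _
    rw [smul_eq_mul, hw]
    show (0 : S) = ((0 : N) : S) • φ (1 - b * t)
    simp
  have := hfi this
  rw [show (0 : N) = ⟨0, N.zero_mem⟩ from rfl] at this
  exact hw0 (by simpa using congrArg Subtype.val this)

include hφ in
/-- von Neumann regularity modulo the Jacobson radical -/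
lemma exists_vnr (a : R) :
    ∃ b : R, a - a * b * a ∈ TwoSidedIdeal.jacobson (⊥ : TwoSidedIdeal R) := by
  obtain ⟨N, hNmem, hmin⟩ := IsArtinian.set_has_minimal
    (Set.range fun b : R => Submodule.span S {φ (a - a * b * a)}) ⟨_, ⟨0, rfl⟩⟩
  obtain ⟨b, hb⟩ := hNmem
  have hb' : Submodule.span S {φ (a - a * b * a)} = N := hb
  refine ⟨b, ?_⟩
  rw [mem_jacobson_bot_iff']
  by_contra hc
  push_neg at hc
  obtain ⟨c, hc⟩ := hc
  have hlt := span_mul_lt φ hφ (a - a * b * a) c hc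
  rw [hb'] at hlt
  have hident : (a - a * b * a) * (1 - c * (a - a * b * a)) =
      a - a * (b + (1 - b * a) * c * (1 - a * b)) * a := by noncomm_ring
  rw [hident] at hlt
  exact hmin _ ⟨_, rfl⟩ hlt

end Aux

section Backward

variable {R : Type u} [Ring R] {S : Type*} [Ring S] [IsSemisimpleRing S]

lemma isSemisimpleRing_quotient_of_local (φ : R →+* S)
    (hφ : ∀ r : R, IsUnit (φ r) → IsUnit r) :
    IsSemisimpleRing (TwoSidedIdeal.jacobson (⊥ : TwoSidedIdeal R)).ringCon.Quotient := by
  set c := (TwoSidedIdeal.jacobson (⊥ : TwoSidedIdeal R)).ringCon with hc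
  set π : R →+* c.Quotient := c.mk' with hπ
  have hsurj : Function.Surjective π := fun q => Quotient.inductionOn' q fun a => ⟨a, rfl⟩
  have hπ0 : ∀ x : R, π x = 0 ↔ x ∈ TwoSidedIdeal.jacobson (⊥ : TwoSidedIdeal R) := by
    intro x
    have : π x = π 0 ↔ c x 0 := c.eq
    rw [map_zero] at this
    rw [this]
    exact ((TwoSidedIdeal.jacobson (⊥ : TwoSidedIdeal R)).mem_iff x).symm
  have hvnr : ∀ x : c.Quotient, ∃ y : c.Quotient, x * y * x = x := by
    intro x
    obtain ⟨a, rfl⟩ := hsurj x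
    obtain ⟨b, hb⟩ := exists_vnr φ hφ a
    refine ⟨π b, ?_⟩
    have := (hπ0 _).mpr hb
    rw [map_sub, map_mul, map_mul, sub_eq_zero] at this
    exact this.symm
  have hid : ∀ h : c.Quotient, h * h = h → h ≠ 0 → ¬ IsUnit (1 - h) := by
    intro h hh hne hu
    obtain ⟨v, hv⟩ := hu.exists_right_inv
    apply hne
    calc h = h * ((1 - h) * v) := by rw [hv, mul_one]
      _ = (h - h * h) * v := by noncomm_ring
      _ = 0 := by rw [hh, sub_self, zero_mul]
  refine (isSemisimpleModule_iff _ _).mpr ⟨?_⟩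
  intro I
  -- main well-founded induction
  have main : ∀ N : Submodule S S, ∀ t : R, Submodule.span S {φ t} = N →
      ∀ e : c.Quotient, e * e = e → e ∈ I → π t = 1 - e →
      ∃ f : c.Quotient, f * f = f ∧ I = Submodule.span c.Quotient {f} := by
    intro N
    induction N using WellFoundedLT.induction with
    | _ N IH =>
      intro t htN e he heI hte
      by_cases hcase : ∀ x ∈ I, ∃ q : c.Quotient, q • e = x
      · refine ⟨e, he, le_antisymm (fun x hx => Submodule.mem_span_singleton.mpr (hcase x hx))
          ?_⟩
        rw [Submodule.span_le, Set.singleton_subset_iff]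
        exact heI
      · push_neg at hcase
        obtain ⟨x, hxI, hxne⟩ := hcase
        set y := x - x * e with hy
        have hyI : y ∈ I := I.sub_mem hxI (by simpa using I.smul_mem x heI)
        have hyne : y ≠ 0 := by
          intro h0
          rw [hy, sub_eq_zero] at h0
          exact hxne x (by rw [smul_eq_mul, ← h0])
        have hye : y * e = 0 := by
          calc y * e = x * e - x * (e * e) := by rw [hy]; noncomm_ring
            _ = 0 := by rw [he, sub_self]
        obtain ⟨z, hz⟩ := hvnr y
        set h := (1 - e) * z * y with hh
        have hhI : h ∈ I := by
          have : h = ((1 - e) * z) • y := by rw [hh, smul_eq_mul, mul_assoc]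
          rw [this]; exact I.smul_mem _ hyI
        have hyh : y * h = y := by
          calc y * h = y * z * y - y * e * (z * y) := by rw [hh]; noncomm_ring
            _ = y := by rw [hye, zero_mul, sub_zero, hz]
        have hne : h ≠ 0 := fun h0 => hyne (by rw [← hyh, h0, mul_zero])
        have hhh : h * h = h := by
          calc h * h = (1 - e) * z * (y * h) := by rw [hh]; noncomm_ring
            _ = h := by rw [hyh, hh]
        have heh : e * h = 0 := by
          calc e * h = (e - e * e) * (z * y) := by rw [hh]; noncomm_ring
            _ = 0 := by rw [he, sub_self, zero_mul]
        have hhe : h * e = 0 := by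
          calc h * e = (1 - e) * z * (y * e) := by rw [hh]; noncomm_ring
            _ = 0 := by rw [hye, mul_zero]
        set e' := e + h with he'def
        have he' : e' * e' = e' := by
          calc e' * e' = e * e + e * h + (h * e + h * h) := by rw [he'def]; noncomm_ring
            _ = e' := by rw [he, heh, hhe, hhh, add_zero, zero_add, he'def]
        have he'I : e' ∈ I := I.add_mem heI hhI
        obtain ⟨h', hh'⟩ := hsurj h
        set t' := t * (1 - h' * t) with ht'def
        have hπt' : π t' = 1 - e' := by
          have h1 : h * (1 - e) = h := by rw [mul_sub, mul_one, hhe, sub_zero]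
          have : π t' = π t * (1 - π h' * π t) := by
            rw [ht'def, map_mul, map_sub, map_one, map_mul]
          rw [this, hh', hte, h1]
          have h2 : (1 - e) * (1 - h) = 1 - e - h + e * h := by noncomm_ring
          rw [h2, heh, add_zero, he'def, sub_sub]
        have hunit : ¬ IsUnit (1 - h' * t) := by
          intro hu
          have := hu.map π
          rw [map_sub, map_one, map_mul, hh', hte] at this
          have h1 : h * (1 - e) = h := by rw [mul_sub, mul_one, hhe, sub_zero]
          rw [h1] at this
          exact hid h hhh hne this
        have hlt : Submodule.span S {φ t'} < N := by
          rw [← htN, ht'def]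
          exact span_mul_lt φ hφ t h' hunit
        exact IH _ hlt t' rfl e' he' he'I hπt'
  obtain ⟨f, hf, hIf⟩ := main (Submodule.span S {φ 1}) 1 rfl 0 (by rw [mul_zero])
    I.zero_mem (by rw [map_one, sub_zero])
  refine ⟨Submodule.span c.Quotient {1 - f}, ?_, ?_⟩
  · rw [Submodule.disjoint_def]
    intro a haI haJ
    rw [hIf] at haI
    obtain ⟨p, hp⟩ := Submodule.mem_span_singleton.mp haI
    obtain ⟨q, hq⟩ := Submodule.mem_span_singleton.mp haJ
    rw [smul_eq_mul] at hp hq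
    have h1 : a * f = a := by
      rw [← hp, mul_assoc, hf]
    have h2 : a * f = 0 := by
      rw [← hq]
      calc q * (1 - f) * f = q * (f - f * f) := by noncomm_ring
        _ = 0 := by rw [hf, sub_self, mul_zero]
    rw [← h1, h2]
  · rw [codisjoint_iff, eq_top_iff]
    intro a _
    rw [hIf]
    refine Submodule.mem_sup.mpr ⟨a * f, ?_, a * (1 - f), ?_, by noncomm_ring⟩
    · exact Submodule.smul_mem _ _ (Submodule.mem_span_singleton_self _)
    · exact Submodule.smul_mem _ _ (Submodule.mem_span_singleton_self _)

end Backward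

/-- A ring `R` is semilocal if and only if there exists a local ring
homomorphism from `R` into a semisimple artinian ring. -/
theorem isSemilocalRing_iff_exists_local_ringHom (R : Type u) [Ring R] :
    IsSemilocalRing R ↔
      ∃ (S : Type u) (_ : Ring S) (φ : R →+* S),
        IsSemisimpleRing S ∧ ∀ r : R, IsUnit (φ r) → IsUnit r := by
  set c := (TwoSidedIdeal.jacobson (⊥ : TwoSidedIdeal R)).ringCon with hc
  set π : R →+* c.Quotient := c.mk' with hπ
  have hsurj : Function.Surjective π := fun q => Quotient.inductionOn' q fun a => ⟨a, rfl⟩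
  have hπ0 : ∀ x : R, π x = 0 ↔ x ∈ TwoSidedIdeal.jacobson (⊥ : TwoSidedIdeal R) := by
    intro x
    have h : π x = π 0 ↔ c x 0 := c.eq
    rw [map_zero] at h
    rw [h]
    exact ((TwoSidedIdeal.jacobson (⊥ : TwoSidedIdeal R)).mem_iff x).symm
  constructor
  · intro hsl
    refine ⟨c.Quotient, inferInstance, π, hsl, ?_⟩
    intro r hr
    obtain ⟨u, hu⟩ := hr
    obtain ⟨b, hb⟩ := hsurj ↑u⁻¹
    have h1 : π (r * b - 1) = 0 := by
      rw [map_sub, map_mul, map_one, hb, ← hu, u.mul_inv, sub_self]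
    have h2 : π (b * r - 1) = 0 := by
      rw [map_sub, map_mul, map_one, hb, ← hu, u.inv_mul, sub_self]
    have hrb : IsUnit (r * b) := by
      have := (mem_jacobson_bot_iff'.mp ((hπ0 _).mp h1)) (-1)
      have heq : 1 - (-1 : R) * (r * b - 1) = r * b := by noncomm_ring
      rwa [heq] at this
    have hbr : IsUnit (b * r) := by
      have := (mem_jacobson_bot_iff'.mp ((hπ0 _).mp h2)) (-1)
      have heq : 1 - (-1 : R) * (b * r - 1) = b * r := by noncomm_ring
      rwa [heq] at this
    obtain ⟨v, hv⟩ := hrb.exists_right_inv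
    obtain ⟨w, hw⟩ := hbr.exists_left_inv
    have hright : r * (b * v) = 1 := by rw [← mul_assoc]; exact hv
    have hleft : (w * b) * r = 1 := by rw [mul_assoc]; exact hw
    have hcoincide : b * v = w * b := by
      calc b * v = ((w * b) * r) * (b * v) := by rw [hleft, one_mul]
        _ = (w * b) * (r * (b * v)) := by noncomm_ring
        _ = w * b := by rw [hright, mul_one]
    exact ⟨⟨r, b * v, hright, by rw [hcoincide]; exact hleft⟩, rfl⟩
  · rintro ⟨S, _, φ, hS, hφ⟩
    exact isSemisimpleRing_quotient_of_local φ hφ
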